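/- arXiv:2309.02374 — 5 statements merged into one kernel-verified Lean document; each statement's English description precedes it below -/
import Mathlib

section
/- Let R be a finite set of cardinality 2d+2 with d even, and let V be the quotient of the space of even-sized subsets of R by the subspace generated by R. For each odd-sized subset T ⊆ R, the map q_T(S) = #(S ∩ T) + (#S)/2 mod 2 is a well-defined quadratic refinement of the intersection pairing e on V. Moreover, T and its complement define the same refinement, and the resulting map from {odd-sized subsets of R modulo complementation} to the set of quadratic refinements of e is a bijection. -/
open scoped BigOperators

set_option linter.unusedSectionVars false
open Finset
open scoped symmDiff

section Aux
variable {R : Type} [Fintype R] [DecidableEq R]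

def sp (v : R → ZMod 2) : Finset R := Finset.univ.filter (fun r => v r = 1)

def gq (T : Finset R) (v : R → ZMod 2) : ZMod 2 :=
  (((sp v ∩ T).card + (sp v).card / 2 : ℕ) : ZMod 2)

lemma zmod2_cases (a : ZMod 2) : a = 0 ∨ a = 1 := by revert a; decide

lemma cast2 {m n : ℕ} (h : m % 2 = n % 2) : (m : ZMod 2) = n :=
  (ZMod.natCast_eq_natCast_iff' m n 2).mpr h

lemma cast2' {m n : ℕ} (h : (m : ZMod 2) = n) : m % 2 = n % 2 :=
  (ZMod.natCast_eq_natCast_iff' m n 2).mp h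

lemma sum_card (A : Finset R) (v : R → ZMod 2) :
    ∑ r ∈ A, v r = ((A ∩ sp v).card : ZMod 2) := by
  rw [card_eq_sum_ones, Nat.cast_sum]
  rw [show A ∩ sp v = A.filter (fun r => v r = 1) by ext x; simp [sp]]
  rw [Finset.sum_filter]
  refine Finset.sum_congr rfl fun r _ => ?_
  rcases zmod2_cases (v r) with h | h <;> simp [h]

lemma sum_mul_card (v w : R → ZMod 2) :
    ∑ r, v r * w r = ((sp v ∩ sp w).card : ZMod 2) := by
  rw [← sum_card (sp v) w]
  simp only [sp]
  rw [Finset.sum_filter]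
  refine Finset.sum_congr rfl fun r _ => ?_
  rcases zmod2_cases (v r) with h | h <;> simp [h]

lemma sp_add (v w : R → ZMod 2) : sp (v + w) = sp v ∆ sp w := by
  ext r
  simp only [sp, mem_filter, mem_univ, true_and, Finset.mem_symmDiff, Pi.add_apply]
  rcases zmod2_cases (v r) with h | h <;> rcases zmod2_cases (w r) with h' | h' <;>
    simp [h, h']

lemma sp_add_one (v : R → ZMod 2) : sp (v + fun _ => 1) = (sp v)ᶜ := by
  ext r
  simp only [sp, mem_filter, mem_univ, true_and, Finset.mem_compl, Pi.add_apply]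
  rcases zmod2_cases (v r) with h | h <;> simp [h]

lemma sp_one : sp (fun _ => (1 : ZMod 2) : R → ZMod 2) = Finset.univ := by
  ext r; simp [sp]

lemma card_symmDiff' (A B : Finset R) :
    (A ∆ B).card + 2 * (A ∩ B).card = A.card + B.card := by
  rw [symmDiff_def, sup_eq_union,
    Finset.card_union_of_disjoint disjoint_sdiff_sdiff]
  have h1 := Finset.card_sdiff_add_card_inter A B
  have h2 := Finset.card_sdiff_add_card_inter B A
  rw [Finset.inter_comm B A] at h2
  omega

lemma inter_symmDiff (C A B : Finset R) : C ∩ (A ∆ B) = (C ∩ A) ∆ (C ∩ B) := by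
  ext r; simp [Finset.mem_symmDiff]; tauto

def pv (a b : R) : R → ZMod 2 :=
  fun x => (if x = a then 1 else 0) + (if x = b then 1 else 0)

lemma pv_sum (a b : R) : ∑ x, pv a b x = 0 := by
  simp [pv, Finset.sum_add_distrib]
  decide

lemma sp_pv (a b : R) (hab : a ≠ b) : sp (pv a b) = {a, b} := by
  ext x
  rw [sp, Finset.mem_filter]
  simp only [sp, pv, mem_filter, mem_univ, true_and, Finset.mem_insert,
    Finset.mem_singleton]
  by_cases hxa : x = a
  · subst hxa; simp [hab]
  · by_cases hxb : x = b
    · subst hxb; simp [Ne.symm hab]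
    · simp [hxa, hxb]

lemma card_pair_inter {a b : R} (hab : a ≠ b) (T : Finset R) :
    ({a, b} ∩ T).card = (if a ∈ T then 1 else 0) + (if b ∈ T then 1 else 0) := by
  have h : ({a, b} : Finset R) ∩ T = ({a, b} : Finset R).filter (· ∈ T) := by
    ext x; simp [Finset.mem_filter]
  rw [h, Finset.card_filter, Finset.sum_pair hab]

end Aux

/-- For `d` even, the maps `q_T(S) = #(S ∩ T) + (#S)/2 mod 2`, for `T ⊆ R`
of odd size, are well-defined quadratic refinements of the intersection pairing `e`;
complementary sets define the same refinement, and the induced map from odd subsets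
modulo complementation to quadratic refinements of `e` is a bijection. -/
theorem stmt_2 (d : ℕ) (hd : Even d) (R : Type) [Fintype R] [DecidableEq R]
    (hR : Fintype.card R = 2 * d + 2)
    (V₀ : Submodule (ZMod 2) (R → ZMod 2))
    (hV₀ : ∀ v : R → ZMod 2, v ∈ V₀ ↔ ∑ r, v r = 0)
    (one : V₀) (hone : (one : R → ZMod 2) = fun _ => 1)
    (e : (V₀ ⧸ Submodule.span (ZMod 2) {one}) →
        (V₀ ⧸ Submodule.span (ZMod 2) {one}) → ZMod 2)
    (he : ∀ S T : V₀, e (Submodule.Quotient.mk S) (Submodule.Quotient.mk T)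
        = ∑ r, (S : R → ZMod 2) r * (T : R → ZMod 2) r) :
    ∃ F : {T : Finset R // Odd T.card} →
        ((V₀ ⧸ Submodule.span (ZMod 2) {one}) → ZMod 2),
      (∀ T (S : V₀), F T (Submodule.Quotient.mk S)
          = ((((Finset.univ.filter fun r => (S : R → ZMod 2) r = 1) ∩ T.1).card
              + (Finset.univ.filter fun r => (S : R → ZMod 2) r = 1).card / 2 : ℕ) : ZMod 2)) ∧
      (∀ T v w, F T (v + w) = F T v + F T w + e v w) ∧
      (∀ T T' : {T : Finset R // Odd T.card}, T'.1 = (T.1)ᶜ → F T' = F T) ∧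
      (∀ T T' : {T : Finset R // Odd T.card}, F T = F T' → T'.1 = T.1 ∨ T'.1 = (T.1)ᶜ) ∧
      (∀ q : (V₀ ⧸ Submodule.span (ZMod 2) {one}) → ZMod 2,
        (∀ v w, q (v + w) = q v + q w + e v w) → ∃ T, F T = q) := by
  obtain ⟨k, hk⟩ := hd
  -- evenness of supports
  have hsp_even : ∀ v : R → ZMod 2, v ∈ V₀ → (sp v).card % 2 = 0 := by
    intro v hv
    have h := (hV₀ v).mp hv
    rw [sum_card Finset.univ v, Finset.univ_inter] at h
    have h2 := cast2' (n := 0) (by simpa using h)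
    omega
  -- well-definedness of gq on the quotient
  have hwd : ∀ (T : Finset R), Odd T.card → ∀ S S' : V₀,
      (Submodule.Quotient.mk S : V₀ ⧸ Submodule.span (ZMod 2) {one})
        = Submodule.Quotient.mk S' → gq T S = gq T S' := by
    intro T hT S S' h
    rw [Submodule.Quotient.eq, Submodule.mem_span_singleton] at h
    obtain ⟨c, hc⟩ := h
    rcases zmod2_cases c with rfl | rfl
    · rw [zero_smul, eq_comm, sub_eq_zero] at hc
      rw [hc]
    · rw [one_smul] at hc
      have hS : S = S' + one := by rw [hc]; abel
      rw [hS]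
      have hco : ((S' + one : V₀) : R → ZMod 2) = (S' : R → ZMod 2) + fun _ => 1 := by
        rw [Submodule.coe_add, hone]
      rw [hco]
      simp only [gq, sp_add_one]
      set A := sp ((S' : R → ZMod 2)) with hA
      have h1 : Aᶜ ∩ T = T \ A := by ext x; simp [Finset.mem_compl, Finset.mem_sdiff]; tauto
      have h2 := Finset.card_sdiff_add_card_inter T A
      have h3 : (T ∩ A).card = (A ∩ T).card := by rw [Finset.inter_comm]
      have h4 := Finset.card_add_card_compl A
      rw [hR] at h4
      have h5 := hsp_even _ S'.2
      rw [← hA] at h5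
      have h6 := Nat.odd_iff.mp hT
      apply cast2
      rw [h1]
      omega
  -- quadratic property of gq
  have hquad : ∀ (T : Finset R) (S S' : V₀),
      gq T ((S + S' : V₀) : R → ZMod 2)
        = gq T S + gq T S' + e (Submodule.Quotient.mk S) (Submodule.Quotient.mk S') := by
    intro T S S'
    rw [he, sum_mul_card]
    have hco : ((S + S' : V₀) : R → ZMod 2) = (S : R → ZMod 2) + (S' : R → ZMod 2) := rfl
    rw [hco]
    simp only [gq, sp_add]
    set A := sp ((S : R → ZMod 2)) with hA
    set B := sp ((S' : R → ZMod 2)) with hB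
    have c2 := card_symmDiff' A B
    have c1 : (T ∩ (A ∆ B)).card + 2 * ((T ∩ A) ∩ (T ∩ B)).card
        = (T ∩ A).card + (T ∩ B).card := by
      rw [inter_symmDiff]; exact card_symmDiff' _ _
    have i1 : ((A ∆ B) ∩ T).card = (T ∩ (A ∆ B)).card := by rw [Finset.inter_comm]
    have i2 : (A ∩ T).card = (T ∩ A).card := by rw [Finset.inter_comm]
    have i3 : (B ∩ T).card = (T ∩ B).card := by rw [Finset.inter_comm]
    have hAe := hsp_even _ S.2
    have hBe := hsp_even _ S'.2
    rw [← hA] at hAe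
    rw [← hB] at hBe
    rw [← Nat.cast_add, ← Nat.cast_add]
    apply cast2
    omega
  have hsurj : Function.Surjective
      (Submodule.Quotient.mk : V₀ → V₀ ⧸ Submodule.span (ZMod 2) {one}) :=
    Submodule.Quotient.mk_surjective _
  set rep : (V₀ ⧸ Submodule.span (ZMod 2) {one}) → V₀ := Function.surjInv hsurj with hrepdef
  have hrep : ∀ x, (Submodule.Quotient.mk (rep x) : V₀ ⧸ Submodule.span (ZMod 2) {one}) = x :=
    fun x => Function.surjInv_eq hsurj x
  refine ⟨fun T x => gq T.1 (rep x), ?_, ?_, ?_, ?_, ?_⟩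
  · -- bullet 1: formula on representatives
    intro T S
    show gq T.1 (rep (Submodule.Quotient.mk S)) = _
    rw [hwd T.1 T.2 (rep (Submodule.Quotient.mk S)) S (hrep _)]
    rfl
  · -- bullet 2: quadratic refinement
    intro T v w
    have h1 : gq T.1 (rep (v + w)) = gq T.1 ((rep v + rep w : V₀)) := by
      apply hwd T.1 T.2
      rw [hrep, Submodule.Quotient.mk_add, hrep, hrep]
    show gq T.1 (rep (v + w)) = _
    rw [h1, hquad T.1 (rep v) (rep w)]
    simp only [hrep]
  · -- bullet 3: complement gives the same refinement
    intro T T' h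
    funext x
    show gq T'.1 (rep x) = gq T.1 (rep x)
    rw [h]
    simp only [gq]
    set A := sp ((rep x : V₀) : R → ZMod 2) with hA
    have h5 := hsp_even _ (rep x).2
    rw [← hA] at h5
    have h1 : A ∩ T.1ᶜ = A \ T.1 := by
      ext y; simp [Finset.mem_sdiff, Finset.mem_compl, and_comm]
    have h2 := Finset.card_sdiff_add_card_inter A T.1
    apply cast2
    rw [h1]
    omega
  · -- bullet 4: injectivity up to complement
    intro T T' h
    have hNE : Nonempty R := Fintype.card_pos_iff.mp (by omega)
    obtain ⟨r₀⟩ := hNE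
    have key : ∀ r r' : R, r ≠ r' →
        (((if r ∈ T.1 then 1 else 0) + (if r' ∈ T.1 then 1 else 0) : ℕ)) % 2
          = (((if r ∈ T'.1 then 1 else 0) + (if r' ∈ T'.1 then 1 else 0) : ℕ)) % 2 := by
      intro r r' hrr
      have hmem : pv r r' ∈ V₀ := (hV₀ _).mpr (pv_sum r r')
      have h1 : gq T.1 (⟨pv r r', hmem⟩ : V₀) = gq T'.1 (⟨pv r r', hmem⟩ : V₀) := by
        have h2 := congrFun h (Submodule.Quotient.mk (⟨pv r r', hmem⟩ : V₀))
        dsimp only at h2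
        calc gq T.1 ((⟨pv r r', hmem⟩ : V₀) : R → ZMod 2)
            = gq T.1 (rep (Submodule.Quotient.mk (⟨pv r r', hmem⟩ : V₀))) :=
              (hwd T.1 T.2 _ _ (hrep _)).symm
          _ = gq T'.1 (rep (Submodule.Quotient.mk (⟨pv r r', hmem⟩ : V₀))) := h2
          _ = gq T'.1 ((⟨pv r r', hmem⟩ : V₀) : R → ZMod 2) := hwd T'.1 T'.2 _ _ (hrep _)
      simp only [gq] at h1
      rw [sp_pv r r' hrr, Finset.card_pair hrr] at h1
      have hc := cast2' h1
      rw [card_pair_inter hrr, card_pair_inter hrr] at hc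
      omega
    have hconst : ∀ r : R,
        (((if r ∈ T.1 then 1 else 0) + (if r ∈ T'.1 then 1 else 0) : ℕ)) % 2
          = (((if r₀ ∈ T.1 then 1 else 0) + (if r₀ ∈ T'.1 then 1 else 0) : ℕ)) % 2 := by
      intro r
      by_cases hr : r = r₀
      · rw [hr]
      · have hk2 := key r r₀ hr
        have b1 : (if r ∈ T.1 then 1 else 0 : ℕ) ≤ 1 := by split <;> omega
        have b2 : (if r₀ ∈ T.1 then 1 else 0 : ℕ) ≤ 1 := by split <;> omega
        have b3 : (if r ∈ T'.1 then 1 else 0 : ℕ) ≤ 1 := by split <;> omega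
        have b4 : (if r₀ ∈ T'.1 then 1 else 0 : ℕ) ≤ 1 := by split <;> omega
        omega
    by_cases hm : (((if r₀ ∈ T.1 then 1 else 0) + (if r₀ ∈ T'.1 then 1 else 0) : ℕ)) % 2 = 0
    · left
      ext x
      have hx := hconst x
      rw [hm] at hx
      constructor
      · intro hxT'
        by_contra hxT
        simp [hxT, hxT'] at hx
      · intro hxT
        by_contra hxT'
        simp [hxT, hxT'] at hx
    · right
      have hm' : (((if r₀ ∈ T.1 then 1 else 0) + (if r₀ ∈ T'.1 then 1 else 0) : ℕ)) % 2 = 1 := by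
        omega
      ext x
      rw [Finset.mem_compl]
      have hx := hconst x
      rw [hm'] at hx
      constructor
      · intro hxT' hxT
        simp [hxT, hxT'] at hx
      · intro hxT
        by_contra hxT'
        simp [hxT, hxT'] at hx
  · -- bullet 5: surjectivity
    intro q hq
    have hNE : Nonempty R := Fintype.card_pos_iff.mp (by omega)
    obtain ⟨r₀⟩ := hNE
    have he00 : e (0 : V₀ ⧸ Submodule.span (ZMod 2) {one}) 0 = 0 := by
      rw [show (0 : V₀ ⧸ Submodule.span (ZMod 2) {one}) = Submodule.Quotient.mk (0 : V₀) from
        (Submodule.Quotient.mk_zero _).symm]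
      rw [he]
      simp
    have hq0 : q 0 = 0 := by
      have h := hq 0 0
      rw [add_zero, he00, add_zero] at h
      rw [CharTwo.add_self_eq_zero (q 0)] at h
      exact h
    have hPmem : ∀ r : R, pv r r₀ ∈ V₀ := fun r => (hV₀ _).mpr (pv_sum r r₀)
    set P : R → V₀ := fun r => ⟨pv r r₀, hPmem r⟩ with hP
    set T₀ : Finset R := {r₀} with hT₀
    have hT₀card : T₀.card = 1 := Finset.card_singleton r₀
    set l : V₀ → ZMod 2 := fun S => q (Submodule.Quotient.mk S) + gq T₀ S with hl
    have hladd : ∀ S S' : V₀, l (S + S') = l S + l S' := by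
      intro S S'
      show q (Submodule.Quotient.mk (S + S')) + gq T₀ ((S + S' : V₀) : R → ZMod 2) = _
      rw [Submodule.Quotient.mk_add, hq, hquad]
      have hee := CharTwo.add_self_eq_zero
        (e (Submodule.Quotient.mk S) (Submodule.Quotient.mk S'))
      show _ = q (Submodule.Quotient.mk S) + gq T₀ S + (q (Submodule.Quotient.mk S') + gq T₀ S')
      linear_combination hee
    set lhom : V₀ →+ ZMod 2 := AddMonoidHom.mk' l hladd with hlhom
    set w : R → ZMod 2 := fun r => l (P r) with hwv
    have hPcoe : ∀ (A : Finset R), ((∑ r ∈ A, P r : V₀) : R → ZMod 2)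
        = ∑ r ∈ A, (pv r r₀ : R → ZMod 2) := by
      intro A
      rw [AddSubmonoidClass.coe_finset_sum]
    have hcast0 : ((2 * d + 2 : ℕ) : ZMod 2) = 0 := by
      rw [show ((0 : ZMod 2)) = ((0 : ℕ) : ZMod 2) from rfl]
      exact cast2 (by omega)
    have hPsum : ∑ r, P r = one := by
      apply Subtype.ext
      rw [hPcoe, hone]
      funext x
      rw [Finset.sum_apply]
      simp only [pv]
      rw [Finset.sum_add_distrib, Finset.sum_ite_eq, Finset.sum_const]
      simp only [Finset.mem_univ, if_true, Finset.card_univ, hR]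
      rw [nsmul_eq_mul, hcast0, zero_mul, add_zero]
    have hmk1 : (Submodule.Quotient.mk one : V₀ ⧸ Submodule.span (ZMod 2) {one}) = 0 :=
      (Submodule.Quotient.mk_eq_zero _).mpr (Submodule.mem_span_singleton_self one)
    have hlone : l one = 0 := by
      show q (Submodule.Quotient.mk one) + gq T₀ ((one : V₀) : R → ZMod 2) = 0
      rw [hmk1, hq0, zero_add, hone]
      simp only [gq, sp_one, Finset.univ_inter, hT₀card, Finset.card_univ, hR]
      rw [show (1 + (2 * d + 2) / 2 : ℕ) = d + 2 by omega]
      rw [show ((0 : ZMod 2)) = ((0 : ℕ) : ZMod 2) from rfl]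
      exact cast2 (by omega)
    have hw_mem : w ∈ V₀ := by
      rw [hV₀]
      have h1 : ∑ r, w r = ∑ r, lhom (P r) := rfl
      rw [h1, ← map_sum, hPsum]
      exact hlone
    have hdecomp : ∀ S : V₀, S = ∑ r ∈ sp ((S : V₀) : R → ZMod 2), P r := by
      intro S
      apply Subtype.ext
      rw [hPcoe]
      funext x
      rw [Finset.sum_apply]
      simp only [pv]
      rw [Finset.sum_add_distrib, Finset.sum_ite_eq, Finset.sum_const]
      have hsc : ((sp ((S : V₀) : R → ZMod 2)).card : ZMod 2) = 0 := by
        rw [show ((0 : ZMod 2)) = ((0 : ℕ) : ZMod 2) from rfl]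
        exact cast2 (by have := hsp_even _ S.2; omega)
      rw [nsmul_eq_mul, hsc, zero_mul, add_zero]
      rcases zmod2_cases ((S : R → ZMod 2) x) with hx | hx
      · rw [hx, if_neg]
        simp only [sp, Finset.mem_filter, Finset.mem_univ, true_and, hx]
        decide
      · rw [hx, if_pos]
        simp only [sp, Finset.mem_filter, Finset.mem_univ, true_and, hx]
    have hlS : ∀ S : V₀, l S = (((sp ((S : V₀) : R → ZMod 2)) ∩ sp w).card : ZMod 2) := by
      intro S
      rw [← _root_.sum_card]
      have h1 : l S = lhom S := rfl
      rw [h1]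
      conv_lhs => rw [hdecomp S]
      rw [map_sum]
      rfl
    have hwe := hsp_even w hw_mem
    have hToddcard : Odd ((T₀ ∆ sp w).card) := by
      have c := card_symmDiff' T₀ (sp w)
      rw [Nat.odd_iff]
      omega
    refine ⟨⟨T₀ ∆ sp w, hToddcard⟩, ?_⟩
    funext x
    show gq (T₀ ∆ sp w) (rep x) = q x
    obtain ⟨S, rfl⟩ := hsurj x
    rw [hwd _ hToddcard _ _ (hrep _)]
    have h2 : q (Submodule.Quotient.mk S) = l S + gq T₀ S := by
      show _ = q (Submodule.Quotient.mk S) + gq T₀ S + gq T₀ S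
      rw [add_assoc, CharTwo.add_self_eq_zero, add_zero]
    rw [h2, hlS]
    simp only [gq]
    set A := sp ((S : V₀) : R → ZMod 2) with hA
    set Wf := sp w with hWf
    have c1 : (A ∩ (T₀ ∆ Wf)).card + 2 * ((A ∩ T₀) ∩ (A ∩ Wf)).card
        = (A ∩ T₀).card + (A ∩ Wf).card := by
      rw [inter_symmDiff]; exact card_symmDiff' _ _
    rw [← Nat.cast_add]
    apply cast2
    omega
end

section
/- Let d ≥ 2 and let V be the quotient of the F₂-space of even-sized subsets of a (2d+2)-element set R by the span of R, with its natural action of the symmetric group G = Sym(R). Then V is a simple F₂[G]-module and every G-equivariant F₂-linear endomorphism of V is scalar, i.e. End_G(V) = F₂. -/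
open scoped BigOperators

set_option maxHeartbeats 2000000 in
/-- For `d ≥ 2`, `V` is a simple `F₂[Sym(R)]`-module and every equivariant
endomorphism of `V` is scalar (i.e. `0` or the identity). -/
theorem stmt_3 (d : ℕ) (hd : 2 ≤ d) (R : Type) [Fintype R] [DecidableEq R]
    (hR : Fintype.card R = 2 * d + 2)
    (V₀ : Submodule (ZMod 2) (R → ZMod 2))
    (hV₀ : ∀ v : R → ZMod 2, v ∈ V₀ ↔ ∑ r, v r = 0)
    (one : V₀) (hone : (one : R → ZMod 2) = fun _ => 1)
    (ρ : Equiv.Perm R →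
        ((V₀ ⧸ Submodule.span (ZMod 2) {one}) →ₗ[ZMod 2]
          (V₀ ⧸ Submodule.span (ZMod 2) {one})))
    (hρ : ∀ (σ : Equiv.Perm R) (S T : V₀),
        (∀ r, (T : R → ZMod 2) (σ r) = (S : R → ZMod 2) r) →
        ρ σ (Submodule.Quotient.mk S) = Submodule.Quotient.mk T) :
    Nontrivial (V₀ ⧸ Submodule.span (ZMod 2) {one}) ∧
    (∀ W : Submodule (ZMod 2) (V₀ ⧸ Submodule.span (ZMod 2) {one}),
        (∀ σ : Equiv.Perm R, ∀ v ∈ W, ρ σ v ∈ W) → W = ⊥ ∨ W = ⊤) ∧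
    (∀ φ : (V₀ ⧸ Submodule.span (ZMod 2) {one}) →ₗ[ZMod 2]
        (V₀ ⧸ Submodule.span (ZMod 2) {one}),
      (∀ (σ : Equiv.Perm R) v, φ (ρ σ v) = ρ σ (φ v)) → φ = 0 ∨ φ = LinearMap.id) := by
  classical
  have z2 : ∀ x : ZMod 2, x = 0 ∨ x = 1 := by decide
  have zadd : ∀ x : ZMod 2, x + x = 0 := by decide
  have hcard6 : 6 ≤ Fintype.card R := by rw [hR]; omega
  -- the basis-ish elements E a b
  have Emem : ∀ a b : R,
      (fun r => (if r = a then (1:ZMod 2) else 0) + (if r = b then 1 else 0)) ∈ V₀ := by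
    intro a b
    rw [hV₀]
    rw [Finset.sum_add_distrib]
    simp only [Finset.sum_ite_eq', Finset.mem_univ, if_pos]
    decide
  set E : R → R → V₀ := fun a b =>
    ⟨fun r => (if r = a then (1:ZMod 2) else 0) + (if r = b then 1 else 0), Emem a b⟩ with hE
  have Eval : ∀ a b r : R, (E a b : R → ZMod 2) r
      = (if r = a then (1:ZMod 2) else 0) + (if r = b then 1 else 0) := fun a b r => rfl
  have Ediag : ∀ a : R, E a a = 0 := by
    intro a
    apply Subtype.ext
    funext r
    simp only [Eval, zadd]
    rfl
  -- the action on V₀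
  have actmem : ∀ (σ : Equiv.Perm R) (S : V₀),
      (fun r => (S : R → ZMod 2) (σ.symm r)) ∈ V₀ := by
    intro σ S
    rw [hV₀]
    rw [Equiv.sum_comp σ.symm (fun r => (S : R → ZMod 2) r)]
    exact (hV₀ _).mp S.2
  set act : Equiv.Perm R → V₀ → V₀ := fun σ S =>
    ⟨fun r => (S : R → ZMod 2) (σ.symm r), actmem σ S⟩ with hactdef
  have actval : ∀ σ S r, (act σ S : R → ZMod 2) r = (S : R → ZMod 2) (σ.symm r) :=
    fun σ S r => rfl
  have hact : ∀ σ S, ρ σ (Submodule.Quotient.mk S) = Submodule.Quotient.mk (act σ S) := by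
    intro σ S
    exact hρ σ S (act σ S) (by intro r; rw [actval, Equiv.symm_apply_apply])
  have act_E : ∀ (σ : Equiv.Perm R) (a b : R), act σ (E a b) = E (σ a) (σ b) := by
    intro σ a b
    apply Subtype.ext
    funext r
    rw [actval, Eval, Eval]
    simp only [show ((σ.symm r : R) = a) ↔ (r = σ a) from by rw [Equiv.symm_apply_eq],
      show ((σ.symm r : R) = b) ↔ (r = σ b) from by rw [Equiv.symm_apply_eq]]
  -- span of one
  have mem_span : ∀ S : V₀, S ∈ Submodule.span (ZMod 2) {one} ↔ S = 0 ∨ S = one := by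
    intro S
    rw [Submodule.mem_span_singleton]
    constructor
    · rintro ⟨c, rfl⟩
      rcases z2 c with h | h <;> simp [h]
    · rintro (rfl | rfl)
      exacts [⟨0, by simp⟩, ⟨1, by simp⟩]
  have mk_eq : ∀ S T : V₀, (Submodule.Quotient.mk S : V₀ ⧸ Submodule.span (ZMod 2) {one})
      = Submodule.Quotient.mk T ↔ S - T = 0 ∨ S - T = one := by
    intro S T
    rw [Submodule.Quotient.eq, mem_span]
  have mk_zero : ∀ S : V₀, (Submodule.Quotient.mk S : V₀ ⧸ Submodule.span (ZMod 2) {one})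
      = 0 ↔ S = 0 ∨ S = one := by
    intro S
    rw [Submodule.Quotient.mk_eq_zero, mem_span]
  -- a third element
  have exists_third : ∀ a b : R, ∃ c : R, c ≠ a ∧ c ≠ b := by
    intro a b
    have hlt : ({a, b} : Finset R).card < Fintype.card R := by
      have h2 : ({a, b} : Finset R).card ≤ 2 :=
        le_trans (Finset.card_insert_le a {b}) (by simp)
      omega
    have hne : ({a, b} : Finset R) ≠ Finset.univ := by
      intro h
      rw [h, Finset.card_univ] at hlt
      exact lt_irrefl _ hlt
    obtain ⟨c, _, hc⟩ := Finset.exists_of_ssubset (Finset.ssubset_univ_iff.mpr hne)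
    simp only [Finset.mem_insert, Finset.mem_singleton, not_or] at hc
    exact ⟨c, hc.1, hc.2⟩
  -- spanning lemma
  have span_lemma : ∀ W : Submodule (ZMod 2) (V₀ ⧸ Submodule.span (ZMod 2) {one}),
      (∀ c e : R, (Submodule.Quotient.mk (E c e) : V₀ ⧸ Submodule.span (ZMod 2) {one}) ∈ W) →
      W = ⊤ := by
    intro W hW
    have key : ∀ n (S : V₀),
        (Finset.univ.filter (fun r => (S : R → ZMod 2) r ≠ 0)).card ≤ n →
        (Submodule.Quotient.mk S : V₀ ⧸ Submodule.span (ZMod 2) {one}) ∈ W := by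
      intro n
      induction n with
      | zero =>
        intro S hS
        have : S = 0 := by
          apply Subtype.ext
          funext r
          by_contra hr
          have : r ∈ Finset.univ.filter (fun r => (S : R → ZMod 2) r ≠ 0) := by
            simp only [Finset.mem_filter, Finset.mem_univ, true_and]
            exact hr
          rw [Finset.card_eq_zero.mp (Nat.le_zero.mp hS)] at this
          simp at this
        rw [this, Submodule.Quotient.mk_zero]
        exact W.zero_mem
      | succ n ih =>
        intro S hS
        by_cases h0 : S = 0
        · rw [h0, Submodule.Quotient.mk_zero]; exact W.zero_mem
        · have ha : ∃ a, (S : R → ZMod 2) a = 1 := by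
            by_contra h
            push_neg at h
            apply h0
            apply Subtype.ext
            funext r
            rcases z2 ((S : R → ZMod 2) r) with h1 | h1
            · exact h1
            · exact absurd h1 (h r)
          obtain ⟨a, ha⟩ := ha
          have hb : ∃ b, b ≠ a ∧ (S : R → ZMod 2) b = 1 := by
            by_contra h
            push_neg at h
            have hsum := (hV₀ _).mp S.2
            rw [Finset.sum_eq_single a] at hsum
            · rw [ha] at hsum; exact one_ne_zero hsum
            · intro b _ hba
              rcases z2 ((S : R → ZMod 2) b) with h1 | h1
              · exact h1
              · exact absurd h1 (h b hba)
            · intro h; exact absurd (Finset.mem_univ a) h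
          obtain ⟨b, hba, hbv⟩ := hb
          set S' : V₀ := S + E a b with hS'
          have hfil : Finset.univ.filter (fun r => (S' : R → ZMod 2) r ≠ 0)
              = ((Finset.univ.filter (fun r => (S : R → ZMod 2) r ≠ 0)).erase b).erase a := by
            ext r
            simp only [Finset.mem_filter, Finset.mem_univ, true_and, Finset.mem_erase]
            have hv : (S' : R → ZMod 2) r = (S : R → ZMod 2) r + (E a b : R → ZMod 2) r := rfl
            by_cases hra : r = a
            · subst hra
              rw [hv, Eval, ha, if_pos rfl, if_neg (Ne.symm hba)]
              simp
              decide
            · by_cases hrb : r = b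
              · subst hrb
                rw [hv, Eval, hbv, if_neg hra, if_pos rfl]
                simp [hra]
                decide
              · rw [hv, Eval, if_neg hra, if_neg hrb]
                simp [hra, hrb]
          have hamem : a ∈ (Finset.univ.filter
              (fun r => (S : R → ZMod 2) r ≠ 0)).erase b := by
            rw [Finset.mem_erase]
            refine ⟨Ne.symm hba, ?_⟩
            simp only [Finset.mem_filter, Finset.mem_univ, true_and]
            rw [ha]; exact one_ne_zero
          have hbmem : b ∈ Finset.univ.filter (fun r => (S : R → ZMod 2) r ≠ 0) := by
            simp only [Finset.mem_filter, Finset.mem_univ, true_and]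
            rw [hbv]; exact one_ne_zero
          have hcard' : (Finset.univ.filter (fun r => (S' : R → ZMod 2) r ≠ 0)).card ≤ n := by
            rw [hfil, Finset.card_erase_of_mem hamem, Finset.card_erase_of_mem hbmem]
            omega
          have hmem' := ih S' hcard'
          have hrec : S = S' + E a b := by
            rw [hS', add_assoc]
            have : E a b + E a b = 0 := by
              apply Subtype.ext
              funext r
              exact zadd _
            rw [this, add_zero]
          rw [hrec, Submodule.Quotient.mk_add]
          exact W.add_mem hmem' (hW a b)
    rw [Submodule.eq_top_iff']
    intro x
    obtain ⟨S, rfl⟩ := Submodule.Quotient.mk_surjective _ x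
    exact key _ S le_rfl
  -- transitivity on pairs
  have trans2 : ∀ a b c e : R, a ≠ b → c ≠ e →
      ∃ σ : Equiv.Perm R, σ a = c ∧ σ b = e := by
    intro a b c e hab hce
    refine ⟨(Equiv.swap a c).trans (Equiv.swap ((Equiv.swap a c) b) e), ?_, ?_⟩
    · rw [Equiv.trans_apply, Equiv.swap_apply_left]
      apply Equiv.swap_apply_of_ne_of_ne
      · intro h
        apply hab
        have := (Equiv.swap a c).injective (h.symm.trans (Equiv.swap_apply_left a c).symm)
        exact this.symm ▸ rfl
      · exact hce
    · rw [Equiv.trans_apply, Equiv.swap_apply_left]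
  -- fixed point lemma
  have fixed : ∀ a b : R, a ≠ b → ∀ x : V₀ ⧸ Submodule.span (ZMod 2) {one},
      (∀ σ : Equiv.Perm R, σ a = a → σ b = b → ρ σ x = x) →
      x = 0 ∨ x = Submodule.Quotient.mk (E a b) := by
    intro a b hab x hx
    obtain ⟨S, rfl⟩ := Submodule.Quotient.mk_surjective _ x
    have const : ∀ c e : R, c ≠ a → c ≠ b → e ≠ a → e ≠ b →
        (S : R → ZMod 2) c = (S : R → ZMod 2) e := by
      intro c e hca hcb hea heb
      by_cases hce : c = e
      · rw [hce]
      · set σ := Equiv.swap c e with hσ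
        have hσa : σ a = a := Equiv.swap_apply_of_ne_of_ne (Ne.symm hca) (Ne.symm hea)
        have hσb : σ b = b := Equiv.swap_apply_of_ne_of_ne (Ne.symm hcb) (Ne.symm heb)
        have h1 := hx σ hσa hσb
        rw [hact] at h1
        rcases (mk_eq _ _).mp h1 with h2 | h2
        · have h3 : act σ S = S := sub_eq_zero.mp h2
          have h5 : σ.symm c = e := by
            rw [hσ, Equiv.symm_swap, Equiv.swap_apply_left]
          have h4 : (S : R → ZMod 2) e = (S : R → ZMod 2) c := by
            have h6 := congrFun (congrArg Subtype.val h3) c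
            rw [show (act σ S).val c = (S : R → ZMod 2) (σ.symm c) from rfl, h5] at h6
            exact h6
          exact h4.symm
        · exfalso
          have h6 : σ.symm a = a := (Equiv.symm_apply_eq σ).mpr hσa.symm
          have h4 := congrFun (congrArg Subtype.val h2) a
          rw [show (act σ S - S).val a
              = (S : R → ZMod 2) (σ.symm a) - (S : R → ZMod 2) a from rfl,
            h6, sub_self] at h4
          have h7 : (one : R → ZMod 2) a = 1 := by rw [hone]
          rw [show one.val a = (one : R → ZMod 2) a from rfl, h7] at h4
          exact zero_ne_one h4
    obtain ⟨c₀, hc₀a, hc₀b⟩ := exists_third a b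
    set ε := (S : R → ZMod 2) c₀ with hε
    have hval : ∀ r : R, r ≠ a → r ≠ b → (S : R → ZMod 2) r = ε :=
      fun r hra hrb => const r c₀ hra hrb hc₀a hc₀b
    have hsum := (hV₀ _).mp S.2
    have hsplit : ∑ r, (S : R → ZMod 2) r
        = (∑ r ∈ ({a, b} : Finset R), (S : R → ZMod 2) r)
          + ∑ r ∈ ({a, b} : Finset R)ᶜ, (S : R → ZMod 2) r :=
      (Finset.sum_add_sum_compl _ _).symm
    have hcompl : ∑ r ∈ ({a, b} : Finset R)ᶜ, (S : R → ZMod 2) r = 0 := by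
      have h1 : ∀ r ∈ ({a, b} : Finset R)ᶜ, (S : R → ZMod 2) r = ε := by
        intro r hr
        simp only [Finset.mem_compl, Finset.mem_insert, Finset.mem_singleton, not_or] at hr
        exact hval r hr.1 hr.2
      rw [Finset.sum_congr rfl h1, Finset.sum_const]
      have h2 : ((2 * d + 2 - 2 : ℕ) : ZMod 2) = 0 := by
        have : (2 * d + 2 - 2 : ℕ) = 2 * d := by omega
        rw [this, Nat.cast_mul]
        rw [show ((2 : ℕ) : ZMod 2) = 0 from by decide, zero_mul]
      have hc : ({a, b} : Finset R)ᶜ.card = 2 * d + 2 - 2 := by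
        rw [Finset.card_compl, hR, Finset.card_insert_of_notMem (by simp [hab]),
          Finset.card_singleton]
      rw [hc, nsmul_eq_mul, h2, zero_mul]
    have hpair : ∑ r ∈ ({a, b} : Finset R), (S : R → ZMod 2) r
        = (S : R → ZMod 2) a + (S : R → ZMod 2) b := Finset.sum_pair hab
    rw [hsplit, hpair, hcompl, add_zero] at hsum
    have hba : (S : R → ZMod 2) b = (S : R → ZMod 2) a := by
      rcases z2 ((S : R → ZMod 2) a) with h | h <;> rcases z2 ((S : R → ZMod 2) b) with h' | h' <;>
        rw [h, h'] at hsum ⊢ <;> first | rfl | (exfalso; revert hsum; decide)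
    rcases z2 ((S : R → ZMod 2) a) with hva | hva <;> rcases z2 ε with hve | hve
    · left
      have hS : S = 0 := by
        apply Subtype.ext; funext r
        by_cases hra : r = a
        · rw [hra, hva]; rfl
        · by_cases hrb : r = b
          · rw [hrb, hba, hva]; rfl
          · rw [hval r hra hrb, hve]; rfl
      rw [hS, Submodule.Quotient.mk_zero]
    · right
      have hSe : S = one + E a b := by
        apply Subtype.ext; funext r
        have hc : ((one + E a b : V₀) : R → ZMod 2) r
            = (one : R → ZMod 2) r + (E a b : R → ZMod 2) r := rfl
        rw [hc, hone, Eval]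
        by_cases hra : r = a
        · rw [hra, hva, if_pos rfl, if_neg hab]
          show (0 : ZMod 2) = 1 + (1 + 0); decide
        · by_cases hrb : r = b
          · rw [hrb, hba, hva, if_neg (Ne.symm hab), if_pos rfl]
            show (0 : ZMod 2) = 1 + (0 + 1); decide
          · rw [hval r hra hrb, hve, if_neg hra, if_neg hrb]
            show (1 : ZMod 2) = 1 + (0 + 0); decide
      rw [hSe, Submodule.Quotient.mk_add]
      have hone0 : (Submodule.Quotient.mk one : V₀ ⧸ Submodule.span (ZMod 2) {one}) = 0 :=
        (Submodule.Quotient.mk_eq_zero _).mpr (Submodule.mem_span_singleton_self one)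
      rw [hone0, zero_add]
    · right
      have hSe : S = E a b := by
        apply Subtype.ext; funext r
        rw [Eval]
        by_cases hra : r = a
        · rw [hra, hva, if_pos rfl, if_neg hab]; decide
        · by_cases hrb : r = b
          · rw [hrb, hba, hva, if_neg (Ne.symm hab), if_pos rfl]; decide
          · rw [hval r hra hrb, hve, if_neg hra, if_neg hrb]; decide
      rw [hSe]
    · left
      have hSe : S = one := by
        apply Subtype.ext; funext r
        rw [hone]
        by_cases hra : r = a
        · rw [hra, hva]
        · by_cases hrb : r = b
          · rw [hrb, hba, hva]
          · rw [hval r hra hrb, hve]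
      rw [hSe, (Submodule.Quotient.mk_eq_zero _).mpr (Submodule.mem_span_singleton_self one)]
  refine ⟨?_, ?_, ?_⟩
  · -- Nontrivial
    obtain ⟨a, b, hab⟩ := Fintype.exists_pair_of_one_lt_card
      (show 1 < Fintype.card R by omega)
    refine ⟨0, Submodule.Quotient.mk (E a b), fun h => ?_⟩
    rcases (mk_zero _).mp h.symm with h1 | h1
    · have h2 := congrFun (congrArg Subtype.val h1) a
      rw [show (E a b).val a
            = (if a = a then (1 : ZMod 2) else 0) + (if a = b then 1 else 0) from rfl,
        if_pos rfl, if_neg hab,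
        show ((0 : V₀)).val a = (0 : ZMod 2) from rfl] at h2
      exact absurd h2 (by decide)
    · obtain ⟨c, hca, hcb⟩ := exists_third a b
      have h2 := congrFun (congrArg Subtype.val h1) c
      rw [show (E a b).val c
            = (if c = a then (1 : ZMod 2) else 0) + (if c = b then 1 else 0) from rfl,
        if_neg hca, if_neg hcb,
        show one.val c = (one : R → ZMod 2) c from rfl, hone] at h2
      exact absurd (show (0 : ZMod 2) + 0 = 1 from h2) (by decide)
  · -- simplicity
    intro W hWinv
    by_cases hbot : W = ⊥
    · exact Or.inl hbot
    right
    obtain ⟨v, hvW, hv0⟩ := (Submodule.ne_bot_iff W).mp hbot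
    obtain ⟨S, rfl⟩ := Submodule.Quotient.mk_surjective _ v
    have hS : ¬(S = 0 ∨ S = one) := by
      rw [← mem_span]
      intro h
      exact hv0 ((Submodule.Quotient.mk_eq_zero _).mpr h)
    push_neg at hS
    obtain ⟨hS0, hS1⟩ := hS
    have ha : ∃ a, (S : R → ZMod 2) a = 1 := by
      by_contra h
      push_neg at h
      apply hS0
      apply Subtype.ext; funext r
      rcases z2 ((S : R → ZMod 2) r) with h1 | h1
      · exact h1
      · exact absurd h1 (h r)
    obtain ⟨a, ha⟩ := ha
    have hb : ∃ b, (S : R → ZMod 2) b = 0 := by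
      by_contra h
      push_neg at h
      apply hS1
      apply Subtype.ext; funext r
      rw [hone]
      rcases z2 ((S : R → ZMod 2) r) with h1 | h1
      · exact absurd h1 (h r)
      · exact h1
    obtain ⟨b, hb⟩ := hb
    have hab : a ≠ b := by
      intro h
      rw [h, hb] at ha
      exact one_ne_zero ha.symm
    have hEW : (Submodule.Quotient.mk (E a b) : V₀ ⧸ Submodule.span (ZMod 2) {one}) ∈ W := by
      have h1 : (Submodule.Quotient.mk S : V₀ ⧸ Submodule.span (ZMod 2) {one})
          + ρ (Equiv.swap a b) (Submodule.Quotient.mk S) ∈ W :=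
        W.add_mem hvW (hWinv _ _ hvW)
      have h2 : (Submodule.Quotient.mk S : V₀ ⧸ Submodule.span (ZMod 2) {one})
          + ρ (Equiv.swap a b) (Submodule.Quotient.mk S) = Submodule.Quotient.mk (E a b) := by
        rw [hact, ← Submodule.Quotient.mk_add]
        congr 1
        apply Subtype.ext; funext r
        have hc : ((S + act (Equiv.swap a b) S : V₀) : R → ZMod 2) r
            = (S : R → ZMod 2) r + (S : R → ZMod 2) ((Equiv.swap a b).symm r) := rfl
        rw [hc, Equiv.symm_swap, Eval]
        by_cases hra : r = a
        · rw [hra, Equiv.swap_apply_left, ha, hb, if_pos rfl, if_neg hab]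
        · by_cases hrb : r = b
          · rw [hrb, Equiv.swap_apply_right, ha, hb, if_neg (Ne.symm hab), if_pos rfl]
          · rw [Equiv.swap_apply_of_ne_of_ne hra hrb, if_neg hra, if_neg hrb, zadd, add_zero]
      rw [← h2]
      exact h1
    apply span_lemma
    intro c e
    by_cases hce : c = e
    · rw [hce, Ediag, Submodule.Quotient.mk_zero]
      exact W.zero_mem
    · obtain ⟨σ, hσa, hσb⟩ := trans2 a b c e hab hce
      have h3 := hWinv σ _ hEW
      rw [hact, act_E, hσa, hσb] at h3
      exact h3
  · -- endomorphisms
    intro φ hφ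
    obtain ⟨a, b, hab⟩ := Fintype.exists_pair_of_one_lt_card
      (show 1 < Fintype.card R by omega)
    have hfix : ∀ σ : Equiv.Perm R, σ a = a → σ b = b →
        ρ σ (φ (Submodule.Quotient.mk (E a b))) = φ (Submodule.Quotient.mk (E a b)) := by
      intro σ h1 h2
      rw [← hφ]
      congr 1
      rw [hact, act_E, h1, h2]
    rcases fixed a b hab _ hfix with h0 | h1
    · left
      rw [← LinearMap.ker_eq_top]
      apply span_lemma
      intro c e
      rw [LinearMap.mem_ker]
      by_cases hce : c = e
      · rw [hce, Ediag, Submodule.Quotient.mk_zero, map_zero]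
      · obtain ⟨σ, hσa, hσb⟩ := trans2 a b c e hab hce
        have h2 : (Submodule.Quotient.mk (E c e) : V₀ ⧸ Submodule.span (ZMod 2) {one})
            = ρ σ (Submodule.Quotient.mk (E a b)) := by
          rw [hact, act_E, hσa, hσb]
        rw [h2, hφ, h0, map_zero]
    · right
      have hker : LinearMap.ker (φ - LinearMap.id) = ⊤ := by
        apply span_lemma
        intro c e
        rw [LinearMap.mem_ker, LinearMap.sub_apply, LinearMap.id_apply, sub_eq_zero]
        by_cases hce : c = e
        · rw [hce, Ediag, Submodule.Quotient.mk_zero, map_zero]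
        · obtain ⟨σ, hσa, hσb⟩ := trans2 a b c e hab hce
          have h2 : (Submodule.Quotient.mk (E c e) : V₀ ⧸ Submodule.span (ZMod 2) {one})
              = ρ σ (Submodule.Quotient.mk (E a b)) := by
            rw [hact, act_E, hσa, hσb]
          rw [h2, hφ, h1]
      apply LinearMap.ext
      intro x
      have hx : x ∈ LinearMap.ker (φ - LinearMap.id) := by
        rw [hker]; exact Submodule.mem_top
      rw [LinearMap.mem_ker, LinearMap.sub_apply, LinearMap.id_apply, sub_eq_zero] at hx
      exact hx
end

section
/- Let d ≥ 1 and let V be the quotient of the F₂-space of even-sized subsets of a (2d+2)-element set R by the span of R, with the natural Sym(R)-action. Then there exists a permutation g of R whose fixed subspace on V is zero, i.e. dim_{F₂} V^g = 0. In particular, one may take g to be a product of two disjoint (d+1)-cycles when d+1 is odd, or a (2d+2)-cycle. -/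
open scoped BigOperators

/-- For `d ≥ 1` there exists a permutation of `R` whose fixed subspace on
`V` is zero. -/
theorem stmt_4 (d : ℕ) (hd : 1 ≤ d) (R : Type) [Fintype R] [DecidableEq R]
    (hR : Fintype.card R = 2 * d + 2)
    (V₀ : Submodule (ZMod 2) (R → ZMod 2))
    (hV₀ : ∀ v : R → ZMod 2, v ∈ V₀ ↔ ∑ r, v r = 0)
    (one : V₀) (hone : (one : R → ZMod 2) = fun _ => 1)
    (ρ : Equiv.Perm R →
        ((V₀ ⧸ Submodule.span (ZMod 2) {one}) →ₗ[ZMod 2]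
          (V₀ ⧸ Submodule.span (ZMod 2) {one})))
    (hρ : ∀ (σ : Equiv.Perm R) (S T : V₀),
        (∀ r, (T : R → ZMod 2) (σ r) = (S : R → ZMod 2) r) →
        ρ σ (Submodule.Quotient.mk S) = Submodule.Quotient.mk T) :
    ∃ σ : Equiv.Perm R, ∀ v : V₀ ⧸ Submodule.span (ZMod 2) {one},
      ρ σ v = v → v = 0 := by
  classical
  have hcard : Fintype.card R = Fintype.card (Option (Fin (2 * d + 1))) := by
    simp [hR]
  let e : R ≃ Option (Fin (2 * d + 1)) := Fintype.equivOfCardEq hcard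
  let π : Equiv.Perm (Option (Fin (2 * d + 1))) :=
    Equiv.optionCongr (finRotate (2 * d + 1))
  let σ : Equiv.Perm R := e.symm.permCongr π
  have hσ : ∀ o, σ (e.symm o) = e.symm (π o) := by
    intro o
    simp [σ, Equiv.permCongr_apply]
  refine ⟨σ, ?_⟩
  intro v hv
  obtain ⟨S, rfl⟩ := Submodule.Quotient.mk_surjective _ v
  have hSsum : ∑ r, (S : R → ZMod 2) r = 0 := (hV₀ _).mp S.2
  have hTmem : (fun r => (S : R → ZMod 2) (σ⁻¹ r)) ∈ V₀ := by
    rw [hV₀]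
    rw [Equiv.sum_comp σ⁻¹ (S : R → ZMod 2)]
    exact hSsum
  set T : V₀ := ⟨fun r => (S : R → ZMod 2) (σ⁻¹ r), hTmem⟩ with hT
  have hrel : ∀ r, (T : R → ZMod 2) (σ r) = (S : R → ZMod 2) r := by
    intro r; simp [hT]
  have hmk : ρ σ (Submodule.Quotient.mk S) = Submodule.Quotient.mk T :=
    hρ σ S T hrel
  rw [hmk] at hv
  have hsub : T - S ∈ Submodule.span (ZMod 2) {one} :=
    (Submodule.Quotient.eq _).mp hv
  obtain ⟨a, ha⟩ := Submodule.mem_span_singleton.mp hsub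
  have hpt : ∀ r, (S : R → ZMod 2) (σ⁻¹ r) = (S : R → ZMod 2) r + a := by
    intro r
    have := congrFun (congrArg (Subtype.val) ha) r
    simp [hone, hT] at this
    have h2 : ∀ x : ZMod 2, -x = x := by decide
    rw [sub_eq_add_neg, h2] at this
    -- this : a = S (σ⁻¹ r) + S r  (roughly)
    have h3 : ∀ u v w : ZMod 2, u = v + w → v = w + u := by decide
    exact h3 _ _ _ this
  have hfix : σ (e.symm none) = e.symm none := by
    rw [hσ]
    simp [π]
  rcases (by decide : ∀ a : ZMod 2, a = 0 ∨ a = 1) a with h0 | h1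
  · -- a = 0 : S invariant under σ, hence constant, hence in span {one}
    subst h0
    have hinv : ∀ r, (S : R → ZMod 2) (σ r) = (S : R → ZMod 2) r := by
      intro r
      have := hpt (σ r)
      simpa using this.symm
    set x : Fin (2 * d + 1) → ZMod 2 := fun j => (S : R → ZMod 2) (e.symm (some j)) with hx
    have hstep : ∀ j : Fin (2 * d + 1), x (j + 1) = x j := by
      intro j
      have : σ (e.symm (some j)) = e.symm (some (j + 1)) := by
        rw [hσ]
        simp [π, finRotate_succ_apply]
      rw [hx]
      simp only
      rw [← this, hinv]
    have hconst : ∀ j, x j = x 0 := by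
      intro j
      induction j using Fin.induction with
      | zero => rfl
      | succ i ih =>
        have hcs : (i.castSucc + 1 : Fin (2 * d + 1)) = i.succ :=
          Fin.coeSucc_eq_succ
        rw [← hcs, hstep, ih]
    set y : ZMod 2 := (S : R → ZMod 2) (e.symm none) with hy
    have hsum2 : y + x 0 = 0 := by
      have h1 : ∑ r, (S : R → ZMod 2) r
          = ∑ o : Option (Fin (2 * d + 1)), (S : R → ZMod 2) (e.symm o) :=
        (Equiv.sum_comp e.symm (S : R → ZMod 2)).symm
      rw [h1] at hSsum
      rw [Fintype.sum_option] at hSsum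
      have h2 : ∑ j, (S : R → ZMod 2) (e.symm (some j)) = ∑ j : Fin (2 * d + 1), x 0 := by
        apply Finset.sum_congr rfl
        intro j _
        exact hconst j
      rw [h2] at hSsum
      rw [Finset.sum_const] at hSsum
      simp only [Finset.card_univ, Fintype.card_fin, nsmul_eq_mul] at hSsum
      have hodd : ((2 * d + 1 : ℕ) : ZMod 2) = 1 := by
        push_cast
        rw [show (2 : ZMod 2) = 0 from rfl]
        ring
      rw [hodd, one_mul] at hSsum
      exact hSsum
    have hyx : y = x 0 := by
      have : ∀ u v : ZMod 2, u + v = 0 → u = v := by decide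
      exact this _ _ hsum2
    rw [Submodule.Quotient.mk_eq_zero]
    apply Submodule.mem_span_singleton.mpr
    refine ⟨x 0, ?_⟩
    ext r
    have : r = e.symm (e r) := (e.symm_apply_apply r).symm
    rw [show ((x 0 • one : V₀) : R → ZMod 2) r = x 0 * 1 by simp [hone]]
    rw [mul_one]
    rw [this]
    cases h : e r with
    | none => exact hyx.symm
    | some j => exact (hconst j).symm
  · -- a = 1 : contradiction at the fixed point
    subst h1
    exfalso
    have := hpt (e.symm none)
    have hfix' : σ⁻¹ (e.symm none) = e.symm none := by
      conv_lhs => rw [← hfix]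
      simp
    rw [hfix'] at this
    have : (1 : ZMod 2) = 0 := by
      have h := this
      have h2 : ∀ u : ZMod 2, u = u + 1 → (1 : ZMod 2) = 0 := by decide
      exact h2 _ h
    exact absurd this (by decide)
end

section
/- Let A be a finite elementary abelian 2-group, viewed as an F₂-vector space. The map sending a cohomology class η ∈ H²(A, {±1}) (for the trivial action) to the function q_η: A → {±1}, q_η(v) = (lift of v in the corresponding central extension)², is well defined and gives an isomorphism of F₂-vector spaces from H²(A, {±1}) onto the space of {±1}-valued quadratic forms on A (functions q with q(0)=1 whose associated form b(v,w) = q(v+w)q(v)q(w) is bilinear). -/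
/-- `η` is a 2-cocycle on the abelian group `A` with values in `F₂` (trivial action). -/
def IsTwoCocycle {A : Type} [AddCommGroup A] (η : A → A → ZMod 2) : Prop :=
  ∀ a b c : A, η b c + η a (b + c) = η (a + b) c + η a b

/-- `η` is normalized. -/
def IsNormalized {A : Type} [AddCommGroup A] (η : A → A → ZMod 2) : Prop :=
  ∀ a : A, η 0 a = 0 ∧ η a 0 = 0

/-- `η` is a 2-coboundary: `η(a,b) = γ(b) + γ(a+b) + γ(a)` for some normalized `γ`. -/
def IsTwoCoboundary {A : Type} [AddCommGroup A] (η : A → A → ZMod 2) : Prop :=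
  ∃ γ : A → ZMod 2, γ 0 = 0 ∧ ∀ a b : A, η a b = γ b + γ (a + b) + γ a

/-- `q` is an `F₂`-valued quadratic form on `A`: `q(0) = 0` and the polarization
`b(v,w) = q(v+w) + q(v) + q(w)` is bilinear (additivity in the first variable suffices,
symmetry being automatic). -/
def IsQuadraticFormF2 {A : Type} [AddCommGroup A] (q : A → ZMod 2) : Prop :=
  q 0 = 0 ∧ ∀ v v' w : A,
    (q (v + v' + w) + q (v + v') + q w)
      = (q (v + w) + q v + q w) + (q (v' + w) + q v' + q w)

/- ### Auxiliary facts about `ZMod 2` -/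

private lemma z2_add_self : ∀ x : ZMod 2, x + x = 0 := by decide
private lemma z2_zzz : ∀ x y : ZMod 2, (0 : ZMod 2) + 0 + 0 = x + y → x = y := by decide
private lemma z2_x0x : ∀ x : ZMod 2, x + 0 + x = 0 := by decide
private lemma z2_eq_sum : ∀ x y e : ZMod 2, e = y + (x + y + e) + x := by decide
private lemma z2_self_add : ∀ x : ZMod 2, x = x + x → x = 0 := by decide
private lemma z2_cases : ∀ c : ZMod 2, c = 0 ∨ c = 1 := by decide
private lemma z2_0xx : ∀ x : ZMod 2, 0 + x + x = 0 := by decide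
private lemma z2_cancel : ∀ x y : ZMod 2, x + y = 0 → x = y := by decide
private lemma z2_dadd : ∀ u x y w s a b : ZMod 2,
    x + y = s + a + b → u + x + (y + w) + s = (u + a) + (w + b) := by decide
private lemma char2_1 (x1 x2 x3 x4 x5 x6 x7 x8 x9 : ZMod 2)
    (h1 : x1 + x2 = x3 + x4) (h2 : x4 + x5 = x6 + x7) (h3 : x8 + x2 = x6 + x9) :
    x3 + x5 = (x9 + x7) + (x1 + x8) := by
  revert x1 x2 x3 x4 x5 x6 x7 x8 x9; decide
private lemma char2_2 (a1 a2 a3 a4 a5 a6 a7 : ZMod 2)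
    (h1 : a1 + 0 = a2 + a3) (h3 : a3 + a4 = a2 + a5) (h4 : a4 + a7 = a6 + a3) :
    a6 + a7 + a1 = a3 + a5 := by
  revert a1 a2 a3 a4 a5 a6 a7; decide

section Aux

variable {A : Type} [AddCommGroup A]

/-- The symmetrization of a 2-cocycle is additive. -/
lemma symm_add_aux (η : A → A → ZMod 2) (hc : IsTwoCocycle η) (a b c : A) :
    η (a + b) c + η c (a + b) = (η a c + η c a) + (η b c + η c b) := by
  have h1 := hc a b c
  have h2 := hc c a b
  have h3 := hc a c b
  rw [add_comm c b] at h3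
  rw [add_comm c a] at h2
  exact char2_1 _ _ _ _ _ _ _ _ _ h1 h2 h3

/-- The polarization of the diagonal of a normalized cocycle is the symmetrization. -/
lemma pol_aux (η : A → A → ZMod 2) (hc : IsTwoCocycle η) (hn : IsNormalized η)
    (h2 : ∀ a : A, a + a = 0) (v w : A) :
    η (v + w) (v + w) + η v v + η w w = η v w + η w v := by
  have h1 := hc v w w
  rw [h2 w, (hn v).2] at h1
  have h3 := hc w v w
  rw [add_comm w v] at h3
  have h4 := hc v w (v + w)
  have hvw : w + (v + w) = v := by rw [add_comm v w, ← add_assoc, h2 w, zero_add]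
  rw [hvw] at h4
  exact char2_2 _ _ _ _ _ _ _ h1 h3 h4

end Aux

/-- The central extension of `A` by `ZMod 2` attached to a cocycle `η` (as a bare type). -/
structure C2Ext (A : Type) (η : A → A → ZMod 2) where
  c : ZMod 2
  v : A

namespace C2Ext

variable {A : Type} [AddCommGroup A] {η : A → A → ZMod 2}

omit [AddCommGroup A] in
lemma ext' {x y : C2Ext A η} (h1 : x.c = y.c) (h2 : x.v = y.v) : x = y := by
  cases x; cases y; cases h1; cases h2; rfl

instance : Add (C2Ext A η) := ⟨fun x y => ⟨x.c + y.c + η x.v y.v, x.v + y.v⟩⟩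
instance : Zero (C2Ext A η) := ⟨⟨0, 0⟩⟩
instance : Neg (C2Ext A η) := ⟨fun x => x⟩

/-- The central extension group attached to a symmetric normalized cocycle with zero diagonal. -/
def grp (hc : IsTwoCocycle η) (hn : IsNormalized η) (hd : ∀ v, η v v = 0)
    (hsymm : ∀ v w, η v w = η w v) (h2 : ∀ a : A, a + a = 0) :
    AddCommGroup (C2Ext A η) where
  add_assoc := by
    rintro ⟨s, a⟩ ⟨t, b⟩ ⟨u, c⟩
    refine ext' ?_ (add_assoc a b c)
    show s + t + η a b + u + η (a + b) c = s + (t + u + η b c) + η a (b + c)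
    linear_combination - hc a b c
  zero_add := by
    rintro ⟨s, a⟩
    refine ext' ?_ (zero_add a)
    show 0 + s + η 0 a = s
    rw [(hn a).1, zero_add, add_zero]
  add_zero := by
    rintro ⟨s, a⟩
    refine ext' ?_ (add_zero a)
    show s + 0 + η a 0 = s
    rw [(hn a).2, add_zero, add_zero]
  nsmul := nsmulRec
  zsmul := zsmulRec
  neg_add_cancel := by
    rintro ⟨s, a⟩
    refine ext' ?_ (h2 a)
    show s + s + η a a = 0
    rw [hd a, add_zero, z2_add_self]
  add_comm := by
    rintro ⟨s, a⟩ ⟨t, b⟩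
    refine ext' ?_ (add_comm a b)
    show s + t + η a b = t + s + η b a
    rw [hsymm a b, add_comm s t]

end C2Ext

/-- For a finite elementary abelian 2-group `A`, the map `η ↦ (v ↦ η(v,v))`
sends normalized 2-cocycles to quadratic forms, is additive, has kernel exactly the
coboundaries, and is surjective onto quadratic forms; i.e. it induces an isomorphism
`H²(A, {±1}) ≅ {quadratic forms on A}`. -/
theorem stmt_8 {A : Type} [AddCommGroup A] [Finite A] (h2 : ∀ a : A, a + a = 0) :
    (∀ η : A → A → ZMod 2, IsTwoCocycle η → IsNormalized η →
      IsQuadraticFormF2 (fun v => η v v)) ∧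
    (∀ η η' : A → A → ZMod 2, ∀ v : A,
      (fun v => (η v v + η' v v)) v = (fun v => η v v) v + (fun v => η' v v) v) ∧
    (∀ η : A → A → ZMod 2, IsTwoCocycle η → IsNormalized η →
      ((∀ v : A, η v v = 0) ↔ IsTwoCoboundary η)) ∧
    (∀ q : A → ZMod 2, IsQuadraticFormF2 q →
      ∃ η : A → A → ZMod 2, IsTwoCocycle η ∧ IsNormalized η ∧ ∀ v, η v v = q v) := by
  haveI : Fact (Nat.Prime 2) := ⟨Nat.prime_two⟩
  letI : Module (ZMod 2) A := AddCommGroup.zmodModule (n := 2) (fun x => by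
    rw [two_nsmul]; exact h2 x)
  refine ⟨?_, ?_, ?_, ?_⟩
  · -- part 1
    intro η hc hn
    refine ⟨(hn 0).1, ?_⟩
    intro v v' w
    have p1 := pol_aux η hc hn h2 (v + v') w
    have p2 := pol_aux η hc hn h2 v w
    have p3 := pol_aux η hc hn h2 v' w
    have s := symm_add_aux η hc v v' w
    beta_reduce
    linear_combination p1 + s - p2 - p3
  · -- part 2
    intro η η' v; rfl
  · -- part 3
    intro η hc hn
    constructor
    · intro hd
      have hsymm : ∀ v w : A, η v w = η w v := by
        intro v w
        have h := pol_aux η hc hn h2 v w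
        rw [hd (v + w), hd v, hd w] at h
        exact z2_zzz _ _ h
      letI : AddCommGroup (C2Ext A η) := C2Ext.grp hc hn hd hsymm h2
      letI : Module (ZMod 2) (C2Ext A η) := AddCommGroup.zmodModule (n := 2) (fun x => by
        rw [two_nsmul]; exact neg_add_cancel x)
      let π : C2Ext A η →ₗ[ZMod 2] A :=
        AddMonoidHom.toZModLinearMap 2 (AddMonoidHom.mk' C2Ext.v (fun x y => rfl))
      have hπ : LinearMap.range π = ⊤ := by
        rw [LinearMap.range_eq_top]
        exact fun a => ⟨⟨0, a⟩, rfl⟩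
      obtain ⟨g, hg⟩ := π.exists_rightInverse_of_surjective hπ
      have hgv : ∀ a : A, (g a).v = a := fun a => DFunLike.congr_fun hg a
      refine ⟨fun a => (g a).c, ?_, ?_⟩
      · show (g 0).c = 0
        rw [map_zero g]
        rfl
      · intro a b
        have hadd : (g (a + b)).c = (g a).c + (g b).c + η (g a).v (g b).v :=
          congrArg C2Ext.c (map_add g a b)
        rw [hgv a, hgv b] at hadd
        show η a b = (g b).c + (g (a + b)).c + (g a).c
        rw [hadd]
        exact z2_eq_sum _ _ _
    · rintro ⟨γ, hγ0, hγ⟩ v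
      rw [hγ v v, h2 v, hγ0]
      exact z2_x0x _
  · -- part 4
    intro q hq
    obtain ⟨hq0, hqadd⟩ := hq
    set bq : A → A → ZMod 2 := fun v w => q (v + w) + q v + q w with hbq
    have bq_comm : ∀ v w, bq v w = bq w v := by
      intro v w; simp only [hbq]; rw [add_comm v w]; ring
    have bq_addl : ∀ v v' w, bq (v + v') w = bq v w + bq v' w := fun v v' w => hqadd v v' w
    have bq_zerol : ∀ w, bq 0 w = 0 := by
      intro w
      have h := bq_addl 0 0 w
      rw [add_zero] at h
      exact z2_self_add _ h
    have bq_smull : ∀ (c : ZMod 2) v w, bq (c • v) w = c * bq v w := by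
      intro c v w
      rcases z2_cases c with h | h <;> subst h
      · rw [zero_smul, zero_mul, bq_zerol]
      · rw [one_smul, one_mul]
    letI : Fintype A := Fintype.ofFinite A
    set B := Module.Basis.ofVectorSpace (ZMod 2) A with hB
    letI : Fintype ↥(Module.Basis.ofVectorSpaceIndex (ZMod 2) A) := Fintype.ofFinite _
    letI : LinearOrder ↥(Module.Basis.ofVectorSpaceIndex (ZMod 2) A) :=
      LinearOrder.lift' (Fintype.equivFin _) (Equiv.injective _)
    -- bilinear expansion of bq
    have bq_sum : ∀ v w, bq v w = ∑ i, B.repr v i * bq (B i) w := by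
      intro v w
      calc bq v w = bq (∑ i, B.repr v i • B i) w := by rw [B.sum_repr]
        _ = ∑ i, bq (B.repr v i • B i) w :=
            map_sum (AddMonoidHom.mk' (fun v => bq v w) (fun a b => bq_addl a b w)) _ _
        _ = ∑ i, B.repr v i * bq (B i) w :=
            Finset.sum_congr rfl (fun i _ => bq_smull _ _ _)
    have bq_sumr : ∀ x w, bq x w = ∑ j, B.repr w j * bq x (B j) := by
      intro x w
      rw [bq_comm x w, bq_sum w x]
      exact Finset.sum_congr rfl fun j _ => by rw [bq_comm (B j) x]
    have bq_sum2 : ∀ v w, bq v w = ∑ i, ∑ j, B.repr v i * B.repr w j * bq (B i) (B j) := by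
      intro v w
      rw [bq_sum v w]
      refine Finset.sum_congr rfl fun i _ => ?_
      rw [bq_sumr (B i) w, Finset.mul_sum]
      exact Finset.sum_congr rfl fun j _ => by ring
    set cm : ↥(Module.Basis.ofVectorSpaceIndex (ZMod 2) A) → ↥(Module.Basis.ofVectorSpaceIndex (ZMod 2) A)
        → ZMod 2 :=
      fun i j => if i < j then bq (B i) (B j) else if i = j then q (B i) else 0 with hcm
    set η : A → A → ZMod 2 := fun x y => ∑ i, ∑ j, B.repr x i * B.repr y j * cm i j with hη
    have η_addl : ∀ x x' y, η (x + x') y = η x y + η x' y := by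
      intro x x' y
      simp only [hη, map_add, Finsupp.add_apply, add_mul, Finset.sum_add_distrib]
    have η_addr : ∀ x y y', η x (y + y') = η x y + η x y' := by
      intro x y y'
      simp only [hη, map_add, Finsupp.add_apply, mul_add, add_mul, Finset.sum_add_distrib]
    have η_zl : ∀ y, η 0 y = 0 := by
      intro y; simp [hη]
    have η_zr : ∀ x, η x 0 = 0 := by
      intro x; simp [hη]
    have cm_symm : ∀ i j, cm i j + cm j i = bq (B i) (B j) := by
      intro i j
      rcases lt_trichotomy i j with h | h | h
      · rw [hcm]
        simp only [if_pos h, if_neg (not_lt_of_gt h), if_neg (ne_of_gt h), add_zero]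
      · subst h
        rw [hcm]
        simp only [if_neg (lt_irrefl i), if_pos rfl]
        have hb : bq (B i) (B i) = 0 := by
          simp only [hbq]
          rw [h2 (B i), hq0]
          exact z2_0xx _
        rw [hb]
        exact z2_add_self _
      · rw [hcm]
        simp only [if_neg (not_lt_of_gt h), if_neg (ne_of_gt h), if_pos h, zero_add]
        exact (bq_comm _ _).symm
    have pol_η : ∀ v w, η v w + η w v = bq v w := by
      intro v w
      rw [bq_sum2 v w]
      have hswap : η w v = ∑ i, ∑ j, B.repr v i * B.repr w j * cm j i := by
        rw [hη]
        rw [Finset.sum_comm]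
        exact Finset.sum_congr rfl fun i _ => Finset.sum_congr rfl fun j _ => by ring
      rw [hswap, hη]
      simp only [← Finset.sum_add_distrib]
      refine Finset.sum_congr rfl fun i _ => Finset.sum_congr rfl fun j _ => ?_
      rw [← cm_symm i j]
      ring
    have η_diag_basis : ∀ k, η (B k) (B k) = q (B k) := by
      intro k
      have hr : ∀ i, B.repr (B k) i = if k = i then 1 else 0 := by
        intro i
        rw [B.repr_self]
        exact Finsupp.single_apply
      simp only [hη]
      rw [Finset.sum_eq_single k]
      · rw [Finset.sum_eq_single k]
        · rw [hr k, if_pos rfl, one_mul, one_mul, hcm]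
          simp [lt_irrefl]
        · intro j _ hj
          rw [hr j, if_neg (fun h => hj h.symm)]
          ring
        · intro h; exact absurd (Finset.mem_univ k) h
      · intro i _ hi
        refine Finset.sum_eq_zero fun j _ => ?_
        rw [hr i, if_neg (fun h => hi h.symm)]
        ring
      · intro h; exact absurd (Finset.mem_univ k) h
    refine ⟨η, ?_, ?_, ?_⟩
    · intro a b c
      rw [η_addr a b c, η_addl a b c]
      ring
    · intro a
      exact ⟨η_zl a, η_zr a⟩
    · -- diagonal equals q
      have d_add : ∀ v w, (η (v + w) (v + w) + q (v + w)) =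
          (η v v + q v) + (η w w + q w) := by
        intro v w
        have he : η (v + w) (v + w) = η v v + η v w + (η w v + η w w) := by
          rw [η_addl v w (v + w), η_addr v v w, η_addr w v w]
        have hp := pol_η v w
        have hb : bq v w = q (v + w) + q v + q w := rfl
        rw [hb] at hp
        rw [he]
        exact z2_dadd (η v v) (η v w) (η w v) (η w w) (q (v + w)) (q v) (q w) hp
      have d_basis : ∀ k, η (B k) (B k) + q (B k) = 0 := by
        intro k
        rw [η_diag_basis k]
        exact z2_add_self _
      have d_zero : η 0 0 + q 0 = 0 := by rw [η_zl 0, hq0, add_zero]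
      have d_all : ∀ v, η v v + q v = 0 := by
        intro v
        have hDadd : ∀ a b : A, (η (a + b) (a + b) + q (a + b)) =
            (η a a + q a) + (η b b + q b) := d_add
        have : (AddMonoidHom.mk' (fun v => η v v + q v) hDadd) v = 0 := by
          have hv : v = ∑ i, B.repr v i • B i := (B.sum_repr v).symm
          rw [hv, map_sum]
          refine Finset.sum_eq_zero fun i _ => ?_
          rcases z2_cases (B.repr v i) with h | h <;> rw [h]
          · rw [zero_smul]
            exact d_zero
          · rw [one_smul]
            exact d_basis i
        exact this
      intro v
      exact z2_cancel _ _ (d_all v)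
end

section
/- Let G be a group, V a finite-dimensional F₂-vector space with G-action preserving a non-degenerate alternating bilinear form e: V × V → F₂, and let a, b: G → V be 1-cocycles. Let γ: G → F₂ be a 1-cochain with dγ = a ∪ b, i.e. γ(στ) + γ(σ) + γ(τ) = e(a(σ), σ·b(τ)) for all σ, τ. Let S = {σ ∈ G : V^σ = 0}, and for σ ∈ S define ψ(σ) = e(P_{a,σ}, b(σ)) + γ(σ), where P_{a,σ} is the unique element with a(σ) = σP_{a,σ} + P_{a,σ}. Then ψ is constant on conjugacy classes of G intersected with S: ψ(τστ⁻¹) = ψ(σ) for all σ ∈ S and τ ∈ G. -/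
/-- The function `ψ(σ) = e(P_{a,σ}, b(σ)) + γ(σ)`, defined on elements `σ`
with `V^σ = 0`, is constant on conjugacy classes. -/
theorem stmt_12 {G V : Type} [Group G] [AddCommGroup V] [Module (ZMod 2) V]
    [FiniteDimensional (ZMod 2) V]
    (ρ : G →* (V →ₗ[ZMod 2] V))
    (e : V →ₗ[ZMod 2] V →ₗ[ZMod 2] ZMod 2)
    (halt : ∀ v : V, e v v = 0)
    (hnd : ∀ v : V, (∀ w : V, e v w = 0) → v = 0)
    (hinv : ∀ (g : G) (v w : V), e (ρ g v) (ρ g w) = e v w)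
    (a b : G → V)
    (ha : ∀ σ τ : G, a (σ * τ) = a σ + ρ σ (a τ))
    (hb : ∀ σ τ : G, b (σ * τ) = b σ + ρ σ (b τ))
    (γ : G → ZMod 2)
    (hγ : ∀ σ τ : G, γ (σ * τ) + γ σ + γ τ = e (a σ) (ρ σ (b τ)))
    (σ τ : G) (P Pc : V)
    (hσ : ∀ v : V, ρ σ v = v → v = 0)
    (hP : a σ = ρ σ P + P)
    (hPc : a (τ * σ * τ⁻¹) = ρ (τ * σ * τ⁻¹) Pc + Pc) :
    e Pc (b (τ * σ * τ⁻¹)) + γ (τ * σ * τ⁻¹) = e P (b σ) + γ σ := by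
  have htwo : (2 : ZMod 2) = 0 := rfl
  have hv2 : ∀ v : V, v + v = 0 := by
    intro v
    have : (2 : ZMod 2) • v = 0 := by rw [htwo, zero_smul]
    simpa [two_smul] using this
  have hcancel : ∀ x y : V, x + y = 0 → x = y := by
    intro x y h
    have hy : -y = y := neg_eq_of_add_eq_zero_left (hv2 y)
    rw [← hy]; exact eq_neg_of_add_eq_zero_left h
  have ρmul : ∀ (g h : G) (v : V), ρ (g * h) v = ρ g (ρ h v) := by
    intro g h v; rw [map_mul]; rfl
  -- a 1 = 0, b 1 = 0
  have a1 : a 1 = 0 := by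
    have h := ha 1 1
    simp only [map_one, Module.End.one_apply, mul_one] at h
    have h0 : a 1 + a 1 = a 1 + 0 := by rw [add_zero]; exact h.symm
    exact add_left_cancel h0
  have b1 : b 1 = 0 := by
    have h := hb 1 1
    simp only [map_one, Module.End.one_apply, mul_one] at h
    have h0 : b 1 + b 1 = b 1 + 0 := by rw [add_zero]; exact h.symm
    exact add_left_cancel h0
  -- inverse cocycle values
  have hainv : ρ τ (a τ⁻¹) = a τ := by
    have h := ha τ τ⁻¹
    rw [mul_inv_cancel, a1] at h
    exact (hcancel _ _ h.symm).symm
  have hbinv : ρ τ (b τ⁻¹) = b τ := by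
    have h := hb τ τ⁻¹
    rw [mul_inv_cancel, b1] at h
    exact (hcancel _ _ h.symm).symm
  have γ1 : γ 1 = 0 := by
    have h := hγ 1 1
    rw [mul_one, a1, map_zero, LinearMap.zero_apply] at h
    linear_combination h - γ 1 * htwo
  -- key representation identities
  have hστ : ∀ v : V, ρ (τ * σ) v = ρ (τ * σ * τ⁻¹) (ρ τ v) := by
    intro v
    rw [← ρmul]
    congr 1
    group
  -- Pc = ρ τ P + a τ
  have hPc2 : Pc = ρ τ P + a τ := by
    have key : a (τ * σ * τ⁻¹) = ρ (τ * σ * τ⁻¹) (ρ τ P + a τ) + (ρ τ P + a τ) := by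
      have e1 : a (τ * σ * τ⁻¹) = a (τ * σ) + ρ (τ * σ) (a τ⁻¹) := ha (τ * σ) τ⁻¹
      rw [e1, ha τ σ, hP, hστ (a τ⁻¹), hainv]
      simp only [map_add]
      rw [← hστ P, ρmul τ σ P]
      abel
    set d := Pc + (ρ τ P + a τ) with hd
    have hfix : ρ (τ * σ * τ⁻¹) d = d := by
      apply hcancel
      have : (ρ (τ * σ * τ⁻¹) Pc + Pc) + (ρ (τ * σ * τ⁻¹) (ρ τ P + a τ) + (ρ τ P + a τ)) = 0 := by
        rw [← hPc, ← key]; exact hv2 _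
      rw [hd, map_add]
      calc ρ (τ * σ * τ⁻¹) Pc + ρ (τ * σ * τ⁻¹) (ρ τ P + a τ) + (Pc + (ρ τ P + a τ))
          = (ρ (τ * σ * τ⁻¹) Pc + Pc) + (ρ (τ * σ * τ⁻¹) (ρ τ P + a τ) + (ρ τ P + a τ)) := by abel
        _ = 0 := this
    have hfix2 : ρ σ (ρ τ⁻¹ d) = ρ τ⁻¹ d := by
      have hgid : σ * τ⁻¹ = τ⁻¹ * (τ * σ * τ⁻¹) := by group
      rw [← ρmul, hgid, ρmul, hfix]
    have hz : ρ τ⁻¹ d = 0 := hσ _ hfix2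
    have : d = 0 := by
      have := congrArg (ρ τ) hz
      rwa [← ρmul, mul_inv_cancel, map_one, Module.End.one_apply, map_zero] at this
    exact hcancel _ _ (by rw [← hd]; exact this)
  -- b (τστ⁻¹)
  have hbσ' : b (τ * σ * τ⁻¹) = b τ + ρ τ (b σ) + ρ (τ * σ * τ⁻¹) (b τ) := by
    rw [hb (τ * σ) τ⁻¹, hb τ σ, hστ (b τ⁻¹), hbinv]
  -- γ (τστ⁻¹)
  have h1 := hγ (τ * σ) τ⁻¹
  have h2 := hγ τ σ
  have h3 := hγ τ τ⁻¹
  rw [mul_inv_cancel, γ1] at h3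
  -- rewrite the e-terms in h1, h3
  rw [hστ (b τ⁻¹), hbinv] at h1
  rw [ha τ σ, hP] at h1
  rw [hbinv] at h3
  -- invariance consequences
  have heQS : e (ρ τ P) (ρ τ (b σ)) = e P (b σ) := hinv τ P (b σ)
  have heQT : e (ρ τ (ρ σ P)) (ρ (τ * σ * τ⁻¹) (b τ)) = e (ρ τ P) (b τ) := by
    rw [← ρmul, hστ P]
    exact hinv _ _ _
  -- now finish with linear algebra over ZMod 2
  rw [hPc2, hbσ']
  simp only [map_add, LinearMap.add_apply] at h1 ⊢
  linear_combination h1 + h2 + h3 +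
    (γ (τ * σ) + γ τ + γ τ⁻¹ + γ σ
      + e (ρ τ P) (b τ) + e (ρ τ P) (ρ (τ * σ * τ⁻¹) (b τ))
      + e (a τ) (b τ) + e (a τ) (ρ τ (b σ)) + e (a τ) (ρ (τ * σ * τ⁻¹) (b τ))) * htwo
    - 2 * (γ (τ * σ) + γ τ + γ τ⁻¹ + γ σ) * htwo
    + heQS + heQT
end
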